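/- Let αₙ : ℝ^d → ℝ be convex functions with αₙ(0) = 0, differentiable at 0, converging locally uniformly to a convex function α which is differentiable at 0 with ∇α(0) = 0. Then ∇αₙ(0) → 0. -/

import Mathlib

open Filter Topology

lemma aux_grad_le (d : ℕ) (f : EuclideanSpace ℝ (Fin d) → ℝ)
    (hc : ConvexOn ℝ Set.univ f) (h0 : f 0 = 0) (hd : DifferentiableAt ℝ f 0)
    (x : EuclideanSpace ℝ (Fin d)) :
    inner ℝ (gradient f 0) x ≤ f x := by
  have key : fderiv ℝ f 0 x ≤ f x := by
    have hline : HasDerivAt (fun t : ℝ => f (t • x)) (fderiv ℝ f 0 x) 0 := by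
      have h1 : HasDerivAt (fun t : ℝ => t • x) x 0 := by
        simpa using (hasDerivAt_id (0:ℝ)).smul_const x
      have h2 : HasFDerivAt f (fderiv ℝ f 0) ((0:ℝ) • x) := by
        simpa using hd.hasFDerivAt
      exact h2.comp_hasDerivAt (0:ℝ) h1
    have hslope : Tendsto (slope (fun t : ℝ => f (t • x)) 0) (𝓝[>] 0)
        (𝓝 (fderiv ℝ f 0 x)) :=
      (hasDerivAt_iff_tendsto_slope.mp hline).mono_left
        (nhdsWithin_mono _ (fun t ht => ne_of_gt ht))
    refine le_of_tendsto hslope ?_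
    filter_upwards [Ioo_mem_nhdsGT_of_mem (by norm_num : (0:ℝ) ∈ Set.Ico 0 1)] with t ht
    have h01 : (0:ℝ) < t := ht.1
    have hle : f (t • x) ≤ t * f x := by
      have h := hc.2 (Set.mem_univ x) (Set.mem_univ (0 : EuclideanSpace ℝ (Fin d)))
        (le_of_lt h01) (by linarith [ht.2] : (0:ℝ) ≤ 1 - t) (by ring)
      rw [smul_zero, add_zero, smul_eq_mul, smul_eq_mul, h0, mul_zero, add_zero] at h
      exact h
    rw [slope_def_field]
    simp only [zero_smul, h0, sub_zero]
    rw [div_le_iff₀ h01]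
    simpa [mul_comm] using hle
  calc inner ℝ (gradient f 0) x = fderiv ℝ f 0 x :=
        InnerProductSpace.toDual_symm_apply
    _ ≤ f x := key

/-- Convergence of gradients at `0` for convex functions `αₙ` with `αₙ(0) = 0` converging
locally uniformly to a convex function `α` with `∇α(0) = 0`. -/
theorem stmt_10 (d : ℕ) (αn : ℕ → EuclideanSpace ℝ (Fin d) → ℝ)
    (α : EuclideanSpace ℝ (Fin d) → ℝ)
    (hconvn : ∀ n, ConvexOn ℝ Set.univ (αn n))
    (h0 : ∀ n, αn n 0 = 0)
    (hdiffn : ∀ n, DifferentiableAt ℝ (αn n) 0)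
    (hconv : ConvexOn ℝ Set.univ α)
    (hdiff : DifferentiableAt ℝ α 0)
    (hgrad : gradient α 0 = 0)
    (hunif : TendstoLocallyUniformly αn α atTop) :
    Tendsto (fun n => gradient (αn n) 0) atTop (nhds 0) := by
  have hα0 : α 0 = 0 := by
    have hsingle : TendstoUniformlyOn αn α atTop {0} :=
      (tendstoLocallyUniformly_iff_forall_isCompact.mp hunif) _ isCompact_singleton
    have := tendstoUniformlyOn_singleton_iff_tendsto.mp hsingle
    simp only [h0] at this
    exact (tendsto_nhds_unique this tendsto_const_nhds)
  rw [Metric.tendsto_nhds]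
  intro ε hε
  -- α is little-o at 0 with derivative zero
  have hfderiv : fderiv ℝ α 0 = 0 := by
    have : (InnerProductSpace.toDual ℝ (EuclideanSpace ℝ (Fin d))).symm (fderiv ℝ α 0) = 0 :=
      hgrad
    have := congrArg (InnerProductSpace.toDual ℝ (EuclideanSpace ℝ (Fin d))) this
    simpa using this
  have hlittle : (fun x => α x - α 0 - fderiv ℝ α 0 (x - 0)) =o[𝓝 0] fun x => x - 0 :=
    hdiff.hasFDerivAt.isLittleO
  have hsmall : ∀ᶠ x in 𝓝 (0 : EuclideanSpace ℝ (Fin d)), |α x| ≤ ε / 4 * ‖x‖ := by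
    have := hlittle.def (by positivity : (0:ℝ) < ε / 4)
    filter_upwards [this] with x hx
    simpa [hα0, hfderiv, Real.norm_eq_abs] using hx
  obtain ⟨δ, hδpos, hδ⟩ := Metric.eventually_nhds_iff.mp hsmall
  set r : ℝ := δ / 2 with hr
  have hrpos : 0 < r := by positivity
  -- uniform convergence on closed ball of radius r
  have hcompact : IsCompact (Metric.closedBall (0 : EuclideanSpace ℝ (Fin d)) r) :=
    isCompact_closedBall _ _
  have huo : TendstoUniformlyOn αn α atTop (Metric.closedBall 0 r) :=
    ((tendstoLocallyUniformly_iff_forall_isCompact).mp hunif) _ hcompact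
  have hev : ∀ᶠ n in atTop, ∀ x ∈ Metric.closedBall (0 : EuclideanSpace ℝ (Fin d)) r,
      dist (α x) (αn n x) < ε / 4 * r :=
    Metric.tendstoUniformlyOn_iff.mp huo _ (by positivity)
  filter_upwards [hev] with n hn
  rw [dist_eq_norm, sub_zero]
  set g := gradient (αn n) 0 with hg
  by_cases hg0 : g = 0
  · rw [hg0]; simpa using hε
  · have hgn : 0 < ‖g‖ := norm_pos_iff.mpr hg0
    set x := (r / ‖g‖) • g with hx
    have hxnorm : ‖x‖ = r := by
      rw [hx, norm_smul, norm_div, Real.norm_eq_abs, abs_of_pos hrpos, norm_norm]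
      field_simp
    have hxball : x ∈ Metric.closedBall (0 : EuclideanSpace ℝ (Fin d)) r := by
      simp [Metric.mem_closedBall, dist_eq_norm, hxnorm]
    have hinner : inner ℝ g x = r * ‖g‖ := by
      rw [hx, real_inner_smul_right, real_inner_self_eq_norm_sq]
      field_simp
    have h1 : r * ‖g‖ ≤ αn n x := by
      rw [← hinner]
      exact aux_grad_le d (αn n) (hconvn n) (h0 n) (hdiffn n) x
    have h2 : αn n x < α x + ε / 4 * r := by
      have hd1 := hn x hxball
      rw [Real.dist_eq] at hd1
      have hb := abs_lt.mp hd1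
      linarith [hb.1]
    have h3 : |α x| ≤ ε / 4 * ‖x‖ := by
      apply hδ
      rw [dist_eq_norm, sub_zero, hxnorm]
      linarith
    rw [hxnorm] at h3
    have : r * ‖g‖ < ε / 4 * r + ε / 4 * r := by
      have := abs_le.mp h3
      linarith
    have hlt : ‖g‖ < ε / 2 := by
      have hr' := hrpos
      nlinarith
    linarith
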